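/- Let G be a simple game and suppose G = H_{n1,k1}∘_{h1} G1 and G = H_{n2,k2}∘_{h2} G2 (equalities of player sets and of collections of winning coalitions), where for i = 1, 2: 1 ≤ k_i < n_i, h_i is a player of the k_i-out-of-n_i game H_{n_i,k_i}, and G_i is a simple game on a nonempty player set disjoint from that of H_{n_i,k_i} such that G_i has no passers. Then n1 = n2, k1 = k2, and G1 = G2 (same player set and same winning coalitions). Likewise, if G = U_{n1}∘_{h1} G1 and G = U_{n2}∘_{h2} G2 where G1 and G2 are simple games on nonempty player sets having no vetoers, then n1 = n2 and G1 = G2. -/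

import Mathlib

open scoped Classical

/-- A simple game: a finite nonempty set of players together with a
nonempty, superset-closed collection of winning coalitions, all of which
are subsets of the player set. -/
structure SimpleGame (α : Type) where
  players : Finset α
  players_nonempty : players.Nonempty
  winning : Finset α → Prop
  winning_subset : ∀ X, winning X → X ⊆ players
  winning_nonempty : ∃ X, winning X
  winning_mono : ∀ ⦃X Y : Finset α⦄, winning X → X ⊆ Y → Y ⊆ players → winning Y

namespace SimpleGame

variable {α : Type}

/-- A minimal winning coalition: winning, and all proper subsets are losing. -/
def MinWinning (G : SimpleGame α) (X : Finset α) : Prop :=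
  G.winning X ∧ ∀ Y ⊂ X, ¬ G.winning Y

/-- A dummy: a player belonging to no minimal winning coalition. -/
def IsDummy (G : SimpleGame α) (p : α) : Prop :=
  ∀ X, G.MinWinning X → p ∉ X

/-- A passer: a player winning on its own. -/
def IsPasser (G : SimpleGame α) (p : α) : Prop := G.winning {p}

/-- A vetoer: a player belonging to every winning coalition. -/
def IsVetoer (G : SimpleGame α) (p : α) : Prop := ∀ X, G.winning X → p ∈ X

/-- Isbell's desirability relation: `i ⪰ j`. -/
def Geq (G : SimpleGame α) (i j : α) : Prop :=
  ∀ X ⊆ G.players, i ∉ X → j ∉ X → G.winning (insert j X) → G.winning (insert i X)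

/-- Strict desirability: `i ≻ j`. -/
def Gt (G : SimpleGame α) (i j : α) : Prop := G.Geq i j ∧ ¬ G.Geq j i

/-- A complete game: the desirability relation is total on players. -/
def Complete (G : SimpleGame α) : Prop :=
  ∀ i ∈ G.players, ∀ j ∈ G.players, G.Geq i j ∨ G.Geq j i

/-- A weighted game: there are nonnegative real weights and a real quota such
that a coalition is winning iff its total weight meets the quota. -/
def Weighted (G : SimpleGame α) : Prop :=
  ∃ (w : α → ℝ) (q : ℝ), (∀ i, 0 ≤ w i) ∧
    ∀ X ⊆ G.players, (G.winning X ↔ q ≤ ∑ i ∈ X, w i)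

/-- `IsComposition C G H g` says that `C` is the composition `G ∘_g H`:
its player set is `(P_G \ {g}) ∪ P_H` and a coalition `X` of `C` is winning
iff `X ∩ P_G` is winning in `G`, or `(X ∩ P_G) ∪ {g}` is winning in `G` and
`X ∩ P_H` is winning in `H`. -/
def IsComposition (C G H : SimpleGame α) (g : α) : Prop :=
  C.players = (G.players \ {g}) ∪ H.players ∧
  ∀ X ⊆ C.players,
    (C.winning X ↔ (G.winning (X ∩ G.players) ∨
      (G.winning (insert g (X ∩ G.players)) ∧ H.winning (X ∩ H.players))))

/-- `G` is the `k`-out-of-`n` game `H_{n,k}`: it has `n` players and a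
coalition is winning iff it has at least `k` players. -/
def IsKOutOfN (G : SimpleGame α) (n k : ℕ) : Prop :=
  G.players.card = n ∧ ∀ X ⊆ G.players, (G.winning X ↔ k ≤ X.card)

/-- Isomorphism of simple games: a bijection between the player sets mapping
winning coalitions exactly onto winning coalitions. -/
def Isomorphic {β : Type} (G : SimpleGame α) (G' : SimpleGame β) : Prop :=
  ∃ σ : α → β, Set.InjOn σ ↑G.players ∧ G.players.image σ = G'.players ∧
    ∀ X ⊆ G.players, (G.winning X ↔ G'.winning (X.image σ))

/-- A decomposable game: one isomorphic to a composition `H ∘_h K` where both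
`H` and `K` have at least two players. -/
def Decomposable (G : SimpleGame α) : Prop :=
  ∃ (β : Type) (H K C : SimpleGame β) (h : β),
    Disjoint H.players K.players ∧ h ∈ H.players ∧
    2 ≤ H.players.card ∧ 2 ≤ K.players.card ∧
    IsComposition C H K h ∧ Isomorphic G C

/-- `(X1, X2; Y1, Y2)` is a trading transform: every player belongs to exactly
as many of `X1, X2` (with multiplicity) as of `Y1, Y2`. -/
def IsTradingTransform2 (X1 X2 Y1 Y2 : Finset α) : Prop :=
  ∀ a : α, ((if a ∈ X1 then 1 else 0) + (if a ∈ X2 then 1 else 0) : ℕ)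
    = (if a ∈ Y1 then 1 else 0) + (if a ∈ Y2 then 1 else 0)

end SimpleGame

open SimpleGame

namespace SimpleGame

variable {α : Type}

/-- Key structural lemma for decompositions `C = H_{n,k} ∘_h K` with `k < n`. -/
lemma part1_key {C H K : SimpleGame α} {n k : ℕ} {h : α}
    (hk1 : 1 ≤ k) (hkn : k < n)
    (hH : IsKOutOfN H n k) (hh : h ∈ H.players)
    (hdisj : Disjoint H.players K.players)
    (hnp : ∀ p ∈ K.players, ¬ K.IsPasser p)
    (hcomp : IsComposition C H K h) :
    H.players.erase h = C.players.filter (fun p => ∀ q ∈ C.players, C.Geq p q) ∧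
    (H.players.erase h).card = n - 1 ∧
    K.players = C.players \ H.players.erase h ∧
    (∀ X ⊆ H.players.erase h, (C.winning X ↔ k ≤ X.card)) ∧
    (∀ S ⊆ H.players.erase h, S.card = k - 1 →
      ∀ X ⊆ K.players, (K.winning X ↔ C.winning (S ∪ X))) := by
  set A := H.players.erase h with hAdef
  have hAsub : A ⊆ H.players := Finset.erase_subset _ _
  have hdisjAK : Disjoint A K.players := Finset.disjoint_of_subset_left hAsub hdisj
  have hPl : C.players = A ∪ K.players := by
    rw [hcomp.1, hAdef, Finset.erase_eq]
  have hAcard : A.card = n - 1 := by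
    rw [hAdef, Finset.card_erase_of_mem hh, hH.1]
  have hAP : A ⊆ C.players := by rw [hPl]; exact Finset.subset_union_left
  have hhC : h ∉ C.players := by
    rw [hPl]
    intro hm
    rcases Finset.mem_union.1 hm with h' | h'
    · exact Finset.notMem_erase h H.players h'
    · exact Finset.disjoint_left.1 hdisj hh h'
  have hinter : ∀ X : Finset α, X ⊆ C.players → X ∩ H.players = X ∩ A := by
    intro X hX
    ext a
    simp only [Finset.mem_inter, hAdef, Finset.mem_erase]
    refine ⟨fun hm => ⟨hm.1, fun he => hhC (he ▸ hX hm.1), hm.2⟩, fun hm => ⟨hm.1, hm.2.2⟩⟩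
  have char : ∀ X ⊆ C.players,
      (C.winning X ↔ (k ≤ (X ∩ A).card ∨
        (k ≤ (X ∩ A).card + 1 ∧ K.winning (X ∩ K.players)))) := by
    intro X hX
    have h1 : X ∩ A ⊆ H.players := Finset.inter_subset_right.trans hAsub
    have h2 : insert h (X ∩ A) ⊆ H.players := Finset.insert_subset hh h1
    have h3 : h ∉ X ∩ A := fun hm =>
      Finset.notMem_erase h H.players (hAdef ▸ Finset.mem_of_mem_inter_right hm)
    rw [hcomp.2 X hX, hinter X hX, hH.2 _ h1, hH.2 _ h2,
      Finset.card_insert_of_notMem h3]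
  have hempty : ¬ K.winning ∅ := by
    intro hw
    obtain ⟨b, hb⟩ := K.players_nonempty
    exact hnp b hb (K.winning_mono hw (Finset.empty_subset _)
      (Finset.singleton_subset_iff.2 hb))
  have hd : ∀ X ⊆ A, (C.winning X ↔ k ≤ X.card) := by
    intro X hX
    have hXP : X ⊆ C.players := hX.trans hAP
    rw [char X hXP, Finset.inter_eq_left.2 hX,
      Finset.disjoint_iff_inter_eq_empty.1 (Finset.disjoint_of_subset_left hX hdisjAK)]
    simp [hempty]
  have he : ∀ S ⊆ A, S.card = k - 1 →
      ∀ X ⊆ K.players, (K.winning X ↔ C.winning (S ∪ X)) := by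
    intro S hS hScard X hX
    have hsub : S ∪ X ⊆ C.players := by
      rw [hPl]; exact Finset.union_subset_union hS hX
    rw [char _ hsub]
    have hSA : (S ∪ X) ∩ A = S := by
      rw [Finset.union_inter_distrib_right, Finset.inter_eq_left.2 hS,
        Finset.disjoint_iff_inter_eq_empty.1
          (Finset.disjoint_of_subset_left hX hdisjAK.symm), Finset.union_empty]
    have hSK : (S ∪ X) ∩ K.players = X := by
      rw [Finset.union_inter_distrib_right, Finset.inter_eq_left.2 hX,
        Finset.disjoint_iff_inter_eq_empty.1
          (Finset.disjoint_of_subset_left hS hdisjAK), Finset.empty_union]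
    rw [hSA, hSK, hScard]
    constructor
    · intro hw; exact Or.inr ⟨by omega, hw⟩
    · rintro (hle | ⟨_, hw⟩)
      · omega
      · exact hw
  refine ⟨?_, hAcard, ?_, hd, he⟩
  · apply Finset.Subset.antisymm
    · intro a ha
      refine Finset.mem_filter.2 ⟨hAP ha, ?_⟩
      intro q hq X hXP haX hqX hw
      have hXq : insert q X ⊆ C.players := Finset.insert_subset hq hXP
      have hXa : insert a X ⊆ C.players := Finset.insert_subset (hAP ha) hXP
      rw [char _ hXq] at hw
      rw [char _ hXa]
      have hcard_a : ((insert a X) ∩ A).card = (X ∩ A).card + 1 := by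
        rw [Finset.insert_inter_of_mem ha,
          Finset.card_insert_of_notMem (fun hm => haX (Finset.mem_of_mem_inter_left hm))]
      have hiaK : (insert a X) ∩ K.players = X ∩ K.players :=
        Finset.insert_inter_of_notMem (Finset.disjoint_left.1 hdisjAK ha)
      rw [hcard_a, hiaK]
      by_cases hqA : q ∈ A
      · have hqK : q ∉ K.players := Finset.disjoint_left.1 hdisjAK hqA
        rw [Finset.insert_inter_of_mem hqA, Finset.insert_inter_of_notMem hqK,
          Finset.card_insert_of_notMem
            (fun hm => hqX (Finset.mem_of_mem_inter_left hm))] at hw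
        exact hw
      · rw [Finset.insert_inter_of_notMem hqA] at hw
        left
        rcases hw with h' | ⟨h', _⟩ <;> omega
    · intro p hp
      obtain ⟨hpP, hdom⟩ := Finset.mem_filter.1 hp
      by_contra hpA
      have hpK : p ∈ K.players := by
        rw [hPl] at hpP
        rcases Finset.mem_union.1 hpP with h' | h'
        · exact absurd h' hpA
        · exact h'
      have hkA : k ≤ A.card := by omega
      obtain ⟨a, ha⟩ : A.Nonempty := Finset.card_pos.1 (by omega)
      obtain ⟨S, hS, hScard⟩ := Finset.exists_subset_card_eq (s := A.erase a) (n := k - 1)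
        (by rw [Finset.card_erase_of_mem ha]; omega)
      have hSA : S ⊆ A := hS.trans (Finset.erase_subset _ _)
      have haS : a ∉ S := fun hm => Finset.notMem_erase a A (hS hm)
      have hpS : p ∉ S := fun hm => Finset.disjoint_left.1 hdisjAK (hSA hm) hpK
      have hSP : S ⊆ C.players := hSA.trans hAP
      have hwin : C.winning (insert a S) := by
        rw [hd (insert a S) (Finset.insert_subset ha hSA),
          Finset.card_insert_of_notMem haS, hScard]
        omega
      have hw2 : C.winning (insert p S) := hdom a (hAP ha) S hSP hpS haS hwin
      rw [char _ (Finset.insert_subset hpP hSP)] at hw2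
      have h1 : insert p S ∩ A = S := by
        rw [Finset.insert_inter_of_notMem (fun hm => Finset.disjoint_left.1 hdisjAK hm hpK),
          Finset.inter_eq_left.2 hSA]
      have h2 : insert p S ∩ K.players = {p} := by
        rw [Finset.insert_inter_of_mem hpK,
          Finset.disjoint_iff_inter_eq_empty.1
            (Finset.disjoint_of_subset_left hSA hdisjAK)]
        rfl
      rw [h1, h2, hScard] at hw2
      rcases hw2 with h' | ⟨_, h'⟩
      · omega
      · exact hnp p hpK h'
  · rw [hPl, Finset.union_sdiff_cancel_left hdisjAK]

/-- Key structural lemma for decompositions `C = U_n ∘_h K`. -/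
lemma part2_key {C H K : SimpleGame α} {n : ℕ} {h : α}
    (hn : 1 ≤ n)
    (hH : IsKOutOfN H n n) (hh : h ∈ H.players)
    (hdisj : Disjoint H.players K.players)
    (hnv : ∀ p ∈ K.players, ¬ K.IsVetoer p)
    (hcomp : IsComposition C H K h) :
    H.players.erase h = C.players.filter (fun p => C.IsVetoer p) ∧
    (H.players.erase h).card = n - 1 ∧
    K.players = C.players \ H.players.erase h ∧
    (∀ X ⊆ K.players, (K.winning X ↔ C.winning (H.players.erase h ∪ X))) := by
  set A := H.players.erase h with hAdef
  have hAsub : A ⊆ H.players := Finset.erase_subset _ _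
  have hdisjAK : Disjoint A K.players := Finset.disjoint_of_subset_left hAsub hdisj
  have hPl : C.players = A ∪ K.players := by
    rw [hcomp.1, hAdef, Finset.erase_eq]
  have hAcard : A.card = n - 1 := by
    rw [hAdef, Finset.card_erase_of_mem hh, hH.1]
  have hAP : A ⊆ C.players := by rw [hPl]; exact Finset.subset_union_left
  have hhC : h ∉ C.players := by
    rw [hPl]
    intro hm
    rcases Finset.mem_union.1 hm with h' | h'
    · exact Finset.notMem_erase h H.players h'
    · exact Finset.disjoint_left.1 hdisj hh h'
  have hinter : ∀ X : Finset α, X ⊆ C.players → X ∩ H.players = X ∩ A := by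
    intro X hX
    ext a
    simp only [Finset.mem_inter, hAdef, Finset.mem_erase]
    refine ⟨fun hm => ⟨hm.1, fun he => hhC (he ▸ hX hm.1), hm.2⟩, fun hm => ⟨hm.1, hm.2.2⟩⟩
  have char : ∀ X ⊆ C.players,
      (C.winning X ↔ (A ⊆ X ∧ K.winning (X ∩ K.players))) := by
    intro X hX
    have h1 : X ∩ A ⊆ H.players := Finset.inter_subset_right.trans hAsub
    have h2 : insert h (X ∩ A) ⊆ H.players := Finset.insert_subset hh h1
    have h3 : h ∉ X ∩ A := fun hm =>
      Finset.notMem_erase h H.players (hAdef ▸ Finset.mem_of_mem_inter_right hm)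
    rw [hcomp.2 X hX, hinter X hX, hH.2 _ h1, hH.2 _ h2,
      Finset.card_insert_of_notMem h3]
    have hle : (X ∩ A).card ≤ n - 1 := by
      have := Finset.card_le_card (Finset.inter_subset_right : X ∩ A ⊆ A)
      omega
    constructor
    · rintro (h' | ⟨h', hw⟩)
      · omega
      · refine ⟨?_, hw⟩
        have hXA : X ∩ A = A :=
          Finset.eq_of_subset_of_card_le Finset.inter_subset_right (by omega)
        exact Finset.inter_eq_right.1 hXA
    · rintro ⟨hAX, hw⟩
      right
      have hXA : X ∩ A = A := Finset.inter_eq_right.2 hAX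
      rw [hXA]
      exact ⟨by omega, hw⟩
  have he : ∀ X ⊆ K.players, (K.winning X ↔ C.winning (A ∪ X)) := by
    intro X hX
    have hsub : A ∪ X ⊆ C.players := by
      rw [hPl]; exact Finset.union_subset_union (subset_refl A) hX
    rw [char _ hsub]
    have hSK : (A ∪ X) ∩ K.players = X := by
      rw [Finset.union_inter_distrib_right, Finset.inter_eq_left.2 hX,
        Finset.disjoint_iff_inter_eq_empty.1 hdisjAK, Finset.empty_union]
    rw [hSK]
    simp [Finset.subset_union_left]
  refine ⟨?_, hAcard, ?_, he⟩
  · apply Finset.Subset.antisymm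
    · intro a ha
      refine Finset.mem_filter.2 ⟨hAP ha, fun X hw => ?_⟩
      exact ((char X (C.winning_subset X hw)).1 hw).1 ha
    · intro p hp
      obtain ⟨hpP, hvet⟩ := Finset.mem_filter.1 hp
      by_contra hpA
      have hpK : p ∈ K.players := by
        rw [hPl] at hpP
        rcases Finset.mem_union.1 hpP with h' | h'
        · exact absurd h' hpA
        · exact h'
      have hnvp := hnv p hpK
      rw [IsVetoer] at hnvp
      push_neg at hnvp
      obtain ⟨Y, hYw, hpY⟩ := hnvp
      have hYK : Y ⊆ K.players := K.winning_subset Y hYw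
      have hwin : C.winning (A ∪ Y) := (he Y hYK).1 hYw
      rcases Finset.mem_union.1 (hvet _ hwin) with h' | h'
      · exact hpA h'
      · exact hpY h'
  · rw [hPl, Finset.union_sdiff_cancel_left hdisjAK]

end SimpleGame

/-- uniqueness of decompositions whose first component is a
`k`-out-of-`n` game (second component with no passers), and whose first
component is a unanimity game (second component with no vetoers). -/
theorem statement10 {α : Type} :
    (∀ (G H1 G1 H2 G2 : SimpleGame α) (n1 k1 n2 k2 : ℕ) (h1 h2 : α),
      1 ≤ k1 → k1 < n1 → 1 ≤ k2 → k2 < n2 →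
      SimpleGame.IsKOutOfN H1 n1 k1 → SimpleGame.IsKOutOfN H2 n2 k2 →
      h1 ∈ H1.players → h2 ∈ H2.players →
      Disjoint H1.players G1.players → Disjoint H2.players G2.players →
      (∀ p ∈ G1.players, ¬ G1.IsPasser p) →
      (∀ p ∈ G2.players, ¬ G2.IsPasser p) →
      SimpleGame.IsComposition G H1 G1 h1 →
      SimpleGame.IsComposition G H2 G2 h2 →
      (n1 = n2 ∧ k1 = k2 ∧ G1.players = G2.players ∧
        ∀ X : Finset α, (G1.winning X ↔ G2.winning X))) ∧
    (∀ (G U1 G1 U2 G2 : SimpleGame α) (n1 n2 : ℕ) (h1 h2 : α),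
      1 ≤ n1 → 1 ≤ n2 →
      SimpleGame.IsKOutOfN U1 n1 n1 → SimpleGame.IsKOutOfN U2 n2 n2 →
      h1 ∈ U1.players → h2 ∈ U2.players →
      Disjoint U1.players G1.players → Disjoint U2.players G2.players →
      (∀ p ∈ G1.players, ¬ G1.IsVetoer p) →
      (∀ p ∈ G2.players, ¬ G2.IsVetoer p) →
      SimpleGame.IsComposition G U1 G1 h1 →
      SimpleGame.IsComposition G U2 G2 h2 →
      (n1 = n2 ∧ G1.players = G2.players ∧
        ∀ X : Finset α, (G1.winning X ↔ G2.winning X))) := by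
  constructor
  · intro G H1 G1 H2 G2 n1 k1 n2 k2 h1 h2 hk11 hk1n hk21 hk2n hH1 hH2 hh1 hh2
      hd1 hd2 hp1 hp2 hc1 hc2
    obtain ⟨e1, c1, b1, d1, f1⟩ := part1_key hk11 hk1n hH1 hh1 hd1 hp1 hc1
    obtain ⟨e2, c2, b2, d2, f2⟩ := part1_key hk21 hk2n hH2 hh2 hd2 hp2 hc2
    have hAeq : H1.players.erase h1 = H2.players.erase h2 := by rw [e1, e2]
    have hceq : (H1.players.erase h1).card = (H2.players.erase h2).card := by rw [hAeq]
    have hn : n1 = n2 := by omega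
    have hk : k1 = k2 := by
      have hle1 : k1 ≤ k2 := by
        obtain ⟨X, hX, hXc⟩ := Finset.exists_subset_card_eq (s := H1.players.erase h1) (n := k2)
          (by omega)
        have w : G.winning X := (d2 X (hAeq ▸ hX)).2 (by omega)
        have := (d1 X hX).1 w
        omega
      have hle2 : k2 ≤ k1 := by
        obtain ⟨X, hX, hXc⟩ := Finset.exists_subset_card_eq (s := H2.players.erase h2) (n := k1)
          (by omega)
        have w : G.winning X := (d1 X (hAeq ▸ hX)).2 (by omega)
        have := (d2 X hX).1 w
        omega
      omega
    have hpeq : G1.players = G2.players := by rw [b1, b2, hAeq]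
    refine ⟨hn, hk, hpeq, fun X => ?_⟩
    by_cases hX : X ⊆ G1.players
    · obtain ⟨S, hS, hScard⟩ := Finset.exists_subset_card_eq (s := H1.players.erase h1)
        (n := k1 - 1) (by omega)
      rw [f1 S hS hScard X hX,
        ← f2 S (hAeq ▸ hS) (by omega) X (hpeq ▸ hX)]
    · constructor <;> intro hw
      · exact absurd (G1.winning_subset X hw) hX
      · exact absurd (G2.winning_subset X hw) (hpeq ▸ hX)
  · intro G U1 G1 U2 G2 n1 n2 h1 h2 hn1 hn2 hH1 hH2 hh1 hh2 hd1 hd2 hv1 hv2 hc1 hc2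
    obtain ⟨e1, c1, b1, f1⟩ := part2_key hn1 hH1 hh1 hd1 hv1 hc1
    obtain ⟨e2, c2, b2, f2⟩ := part2_key hn2 hH2 hh2 hd2 hv2 hc2
    have hAeq : U1.players.erase h1 = U2.players.erase h2 := by rw [e1, e2]
    have hceq : (U1.players.erase h1).card = (U2.players.erase h2).card := by rw [hAeq]
    have hn : n1 = n2 := by omega
    have hpeq : G1.players = G2.players := by rw [b1, b2, hAeq]
    refine ⟨hn, hpeq, fun X => ?_⟩
    by_cases hX : X ⊆ G1.players
    · rw [f1 X hX, hAeq, ← f2 X (hpeq ▸ hX)]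
    · constructor <;> intro hw
      · exact absurd (G1.winning_subset X hw) hX
      · exact absurd (G2.winning_subset X hw) (hpeq ▸ hX)
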